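/- Let X be a complex Banach space, x, y ∈ X, and θ ∈ [0, π] with α = e^{iθ}. If ‖x + tαy‖ ≥ ‖x‖ for all t ≥ 0, then either ‖x + tβy‖ ≥ ‖x‖ for all t ≥ 0 and all unimodular β with arg β ∈ [0, θ], or ‖x + tβy‖ ≥ ‖x‖ for all t ≥ 0 and all unimodular β with arg β ∈ [θ, π]. -/

import Mathlib

lemma key_sin (a b c : ℝ) :
    (Real.sin (c - b) : ℂ) * Complex.exp (a * Complex.I)
      + (Real.sin (b - a) : ℂ) * Complex.exp (c * Complex.I)
      = (Real.sin (c - a) : ℂ) * Complex.exp (b * Complex.I) := by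
  rw [Complex.ofReal_sin, Complex.ofReal_sin, Complex.ofReal_sin]
  simp only [Complex.sin, Complex.ofReal_sub, sub_mul, neg_mul, Complex.exp_sub, Complex.exp_neg]
  have ha := Complex.exp_ne_zero ((a:ℂ) * Complex.I)
  have hb := Complex.exp_ne_zero ((b:ℂ) * Complex.I)
  have hc := Complex.exp_ne_zero ((c:ℂ) * Complex.I)
  field_simp
  ring

theorem stmt_10 {X : Type*} [NormedAddCommGroup X] [NormedSpace ℂ X] [CompleteSpace X]
    (x y : X) (θ : ℝ) (hθ : θ ∈ Set.Icc 0 Real.pi)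
    (h : ∀ t : ℝ, 0 ≤ t → ‖x + ((t : ℂ) * Complex.exp (θ * Complex.I)) • y‖ ≥ ‖x‖) :
    (∀ β : ℂ, ‖β‖ = 1 → β.arg ∈ Set.Icc 0 θ →
        ∀ t : ℝ, 0 ≤ t → ‖x + ((t : ℂ) * β) • y‖ ≥ ‖x‖) ∨
    (∀ β : ℂ, ‖β‖ = 1 → β.arg ∈ Set.Icc θ Real.pi →
        ∀ t : ℝ, 0 ≤ t → ‖x + ((t : ℂ) * β) • y‖ ≥ ‖x‖) := by
  rw [or_iff_not_imp_left]
  intro hL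
  push_neg at hL
  obtain ⟨β₁, hβ₁n, hβ₁a, t₁, ht₁, hlt⟩ := hL
  intro β hβn hβa t ht
  -- express β₁, β as exponentials
  have hβ₁e : β₁ = Complex.exp ((β₁.arg : ℂ) * Complex.I) := by
    conv_lhs => rw [← Complex.norm_mul_exp_arg_mul_I β₁]
    rw [hβ₁n, Complex.ofReal_one, one_mul]
  have hβe : β = Complex.exp ((β.arg : ℂ) * Complex.I) := by
    conv_lhs => rw [← Complex.norm_mul_exp_arg_mul_I β]
    rw [hβn, Complex.ofReal_one, one_mul]
  set φ₁ := β₁.arg with hφ₁def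
  set φ := β.arg with hφdef
  obtain ⟨hφ₁0, hφ₁θ⟩ := hβ₁a
  obtain ⟨hφθ, hφπ⟩ := hβa
  -- t₁ > 0
  have ht₁pos : 0 < t₁ := by
    rcases ht₁.lt_or_eq with h' | h'
    · exact h'
    · exfalso; rw [← h'] at hlt; simp at hlt
  -- φ₁ ≠ θ
  have hφ₁θ' : φ₁ < θ := by
    rcases hφ₁θ.lt_or_eq with h' | h'
    · exact h'
    · exfalso
      have := h t₁ ht₁
      rw [← h', ← hβ₁e] at this
      exact absurd this (not_le.2 hlt)
  -- dispatch φ = θ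
  rcases hφθ.eq_or_lt with h' | hθφ
  · rw [hβe, ← h']
    exact h t ht
  -- dispatch t = 0
  rcases ht.eq_or_lt with h' | htpos
  · simp [← h']
  by_contra hgoal
  push_neg at hgoal
  have hθpos : 0 < θ := lt_of_le_of_lt hφ₁0 hφ₁θ'
  have hθπ : θ < Real.pi := lt_of_lt_of_le hθφ hφπ
  have hs1 : 0 < Real.sin (θ - φ₁) :=
    Real.sin_pos_of_pos_of_lt_pi (by linarith) (by linarith)
  have hs2 : 0 < Real.sin (φ - θ) :=
    Real.sin_pos_of_pos_of_lt_pi (by linarith) (by linarith)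
  have hs3 : 0 ≤ Real.sin (φ - φ₁) :=
    Real.sin_nonneg_of_nonneg_of_le_pi (by linarith) (by linarith)
  set u := t₁ * Real.sin (θ - φ₁) with hu
  set v := t * Real.sin (φ - θ) with hv
  have hupos : 0 < u := mul_pos ht₁pos hs1
  have hvpos : 0 < v := mul_pos htpos hs2
  have huv : 0 < u + v := by linarith
  set lam := v / (u + v) with hlam
  have hlam0 : 0 < lam := div_pos hvpos huv
  have hlam1 : lam < 1 := by
    rw [hlam, div_lt_one huv]; linarith
  set s := t * t₁ * Real.sin (φ - φ₁) / (u + v) with hs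
  have hs0 : 0 ≤ s := by positivity
  -- scalar identity
  have hsc : (s : ℂ) * Complex.exp ((θ:ℂ) * Complex.I)
      = (lam : ℂ) * ((t₁ : ℂ) * β₁) + ((1 - lam : ℝ) : ℂ) * ((t : ℂ) * β) := by
    rw [hβ₁e, hβe]
    have h1lam : (1 - lam : ℝ) = u / (u + v) := by
      rw [hlam]; field_simp; ring
    rw [h1lam, hs, hlam, hu, hv]
    have key := key_sin φ₁ θ φ
    have huv' : ((u + v : ℝ) : ℂ) ≠ 0 := by
      exact_mod_cast ne_of_gt huv
    push_cast [hu, hv] at huv' key ⊢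
    field_simp
    linear_combination (-(t:ℂ) * (t₁:ℂ)) * key
  -- vector identity
  have hvec : x + ((s:ℂ) * Complex.exp ((θ:ℂ) * Complex.I)) • y
      = ((lam : ℝ) : ℂ) • (x + ((t₁:ℂ) * β₁) • y)
        + (((1 - lam : ℝ)) : ℂ) • (x + ((t:ℂ) * β) • y) := by
    rw [hsc]
    push_cast
    module
  have hcontra := h s hs0
  rw [hvec] at hcontra
  have hb1 : ‖x + ((t₁:ℂ) * β₁) • y‖ < ‖x‖ := hlt
  have hkey : ‖((lam : ℝ) : ℂ) • (x + ((t₁:ℂ) * β₁) • y)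
      + (((1 - lam : ℝ)) : ℂ) • (x + ((t:ℂ) * β) • y)‖
      ≤ lam * ‖x + ((t₁:ℂ) * β₁) • y‖ + (1 - lam) * ‖x + ((t:ℂ) * β) • y‖ := by
    refine (norm_add_le _ _).trans ?_
    rw [norm_smul, norm_smul, Complex.norm_real, Complex.norm_real, Real.norm_eq_abs,
      Real.norm_eq_abs, abs_of_pos hlam0, abs_of_pos (by linarith : (0:ℝ) < 1 - lam)]
  nlinarith [hcontra, hkey, hb1, hgoal]
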